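/- Let n ≥ 6 with n ≡ 0 (mod 3) and let σ₁, …, σ_n be the T_2(n) list of sequences over A = {1, 2, …, n}. Let k be an integer with 3 < k < n−2 and k ≡ 2 (mod 3), and assume the list σ₁, …, σ_{k−2} is forward complete. Let σ' = σ_{k−1} | (n−3) be σ_{k−1} with its last two elements removed. Then for every ρ ∈ [A]_k with last element ρ[k] = n, the initial segment ρ | (k−1) is a subsequence of the concatenation σ₁σ₂⋯σ_{k−2}σ'. -/

import Mathlib

/-- `ρ ∈ [A]_k`: a sequence over `A` of length `k` with pairwise distinct elements. -/
def DistinctSeq (A : Finset ℕ) (k : ℕ) (ρ : List ℕ) : Prop :=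
  ρ.length = k ∧ ρ.Nodup ∧ ∀ a ∈ ρ, a ∈ A

/-- `σ` is `k`-complete over `A`: every member of `[A]_k` is a subsequence of `σ`. -/
def IsKComplete (A : Finset ℕ) (k : ℕ) (σ : List ℕ) : Prop :=
  ∀ ρ : List ℕ, DistinctSeq A k ρ → ρ.Sublist σ

/-- `σ` is a supersequence over `A`: it contains every permutation of `A` as a
subsequence, i.e. it is `|A|`-complete. -/
def IsSupersequence (A : Finset ℕ) (σ : List ℕ) : Prop :=
  IsKComplete A A.card σ

/-- A list of sequences `σ₁, …, σ_n` is forward complete if for every `1 ≤ k ≤ n`,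
the concatenation `σ₁σ₂⋯σ_k` is `k`-complete. -/
def ForwardComplete (A : Finset ℕ) (L : List (List ℕ)) : Prop :=
  ∀ k, 1 ≤ k → k ≤ L.length → IsKComplete A k ((L.take k).flatten)

/-- A list of sequences `σ₁, …, σ_n` is backward complete if for every `1 ≤ k ≤ n`,
the concatenation `σ_{n-k+1}⋯σ_n` is `k`-complete. -/
def BackwardComplete (A : Finset ℕ) (L : List (List ℕ)) : Prop :=
  ∀ k, 1 ≤ k → k ≤ L.length → IsKComplete A k ((L.drop (L.length - k)).flatten)

/-- Strongly complete: both forward and backward complete. -/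
def StronglyComplete (A : Finset ℕ) (L : List (List ℕ)) : Prop :=
  ForwardComplete A L ∧ BackwardComplete A L

/-- The `T₁(n)` sequences (1-indexed): `T1 n k` is the `k`-th sequence `σ_k`.
`σ₁ = ⟨1,…,n⟩`, `σ₂ = ⟨1,…,n-1⟩`, for `2 < k < n`,
`σ_k = σ_{k-2}[-1] · σ_{k-1}[1,-2]`, and `σ_n = σ_{n-2}[-1] · σ_{n-1}[1,-1]`. -/
def T1 (n : ℕ) : ℕ → List ℕ
  | 0 => []
  | 1 => List.range' 1 n
  | 2 => List.range' 1 (n-1)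
  | (k+3) =>
      (T1 n (k+1)).getLastD 0 ::
        (if k + 3 = n then T1 n (k+2) else (T1 n (k+2)).dropLast)

/-- The `T₁(n)` list of sequences `σ₁, σ₂, …, σ_n`. -/
def T1List (n : ℕ) : List (List ℕ) := (List.range n).map (fun i => T1 n (i+1))

/-- The `T₂(n)` sequences (1-indexed): `T2 n k` is the `k`-th sequence `σ_k`,
for `n ≥ 6`, `n ≡ 0 (mod 3)`, following Definition 9 of the paper. -/
def T2 (n : ℕ) : ℕ → List ℕ
  | 0 => []
  | 1 => T1 n 1
  | 2 => T1 n 2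
  | 3 => T1 n 3
  | (k+4) =>
      let K := k+4
      let p := T2 n (k+3)  -- σ_{K-1}
      let q := T2 n (k+2)  -- σ_{K-2}
      let l := p.length
      if K = n then
        -- σ_n = σ_{n-2}[-1] · σ_{n-1}[1,-1]
        q.getLastD 0 :: p
      else if K = n-1 then
        -- σ_{n-1} = σ_{n-3}[-1] · σ_{n-2}[1,-2]
        q.getLastD 0 :: p.dropLast
      else if K = n-2 then
        -- σ_{n-2} = σ_{n-4}[-1] · σ_{n-3}[1] · σ_{n-3}[3,-2] · n
        q.getLastD 0 :: p.headD 0 :: (p.dropLast.drop 2 ++ [n])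
      else if K % 3 = 1 then
        if K = 4 then
          -- σ₄ = σ₂[-1] · σ₃[2,-3] · n · σ₃[-2]
          q.getLastD 0 :: ((p.take (l-2)).drop 1 ++ [n, p.dropLast.getLastD 0])
        else
          -- σ_k = σ_{k-2}[-1] · σ_{k-1}[1] · σ_{k-1}[3,-3] · n · σ_{k-1}[-2]
          q.getLastD 0 :: p.headD 0 :: ((p.take (l-2)).drop 2 ++ [n, p.dropLast.getLastD 0])
      else if K % 3 = 2 then
        -- σ_k = σ_{k-2}[-1] · σ_{k-1}[1,-3]
        q.getLastD 0 :: p.take (l-2)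
      else
        -- σ_k = σ_{k-2}[-1] · n · σ_{k-1}[1,-2]
        q.getLastD 0 :: n :: p.dropLast

/-- The `T₂(n)` list of sequences `σ₁, σ₂, …, σ_n`. -/
def T2List (n : ℕ) : List (List ℕ) := (List.range n).map (fun i => T2 n (i+1))

open List

section Helpers

lemma strip_cons {α : Type*} {l s : List α} {x : α} (h : l <+ x :: s) (hx : x ∉ l) : l <+ s := by
  cases h with
  | cons _ h => exact h
  | cons_cons _ h => exact absurd mem_cons_self hx

lemma strip_last {α : Type*} {l s : List α} {x : α} (h : l <+ s ++ [x]) (hx : x ∉ l) : l <+ s := by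
  have h1 : l.reverse <+ x :: s.reverse := by
    have := h.reverse; simpa using this
  have h2 := strip_cons h1 (by simpa using hx)
  simpa using h2.reverse

lemma pair_sublist_range' {c w s d : ℕ} (h1 : s ≤ c) (h2 : c < w) (h3 : w < s + d) :
    [c, w] <+ range' s d := by
  have heq : range' s (c+1-s) ++ range' (c+1) (d - (c+1-s)) = range' s d := by
    have := List.range'_append (s := s) (m := c+1-s) (n := d - (c+1-s)) (step := 1)
    simp only [one_mul] at this
    have h4 : s + (c+1-s) = c+1 := by omega
    rw [h4] at this
    rw [this]; congr 1; omega
  rw [← heq]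
  have hc : [c] <+ range' s (c+1-s) := by
    rw [singleton_sublist, mem_range'_1]; omega
  have hw : [w] <+ range' (c+1) (d - (c+1-s)) := by
    rw [singleton_sublist, mem_range'_1]; omega
  simpa using hc.append hw

lemma take_range'_ (s d m : ℕ) : (range' s d).take m = range' s (min m d) := by
  induction d generalizing s m with
  | zero => simp
  | succ d ih =>
    cases m with
    | zero => simp
    | succ m => rw [range'_succ]; simp [ih, range'_succ, Nat.succ_min_succ]

lemma range'_dropLast (s d : ℕ) : (range' s d).dropLast = range' s (d-1) := by
  cases d with
  | zero => simp
  | succ d => rw [range'_concat]; simp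

lemma range'_getLastD (s d : ℕ) (hd : 1 ≤ d) : (range' s d).getLastD 0 = s + d - 1 := by
  obtain ⟨d', rfl⟩ : ∃ d', d = d' + 1 := ⟨d-1, by omega⟩
  rw [range'_concat]; rw [getLastD_concat]; omega

lemma getLastD_append' (l r : List ℕ) (hr : r ≠ []) : (l ++ r).getLastD 0 = r.getLastD 0 := by
  obtain rfl | ⟨L, b, rfl⟩ := r.eq_nil_or_concat
  · exact absurd rfl hr
  · rw [concat_eq_append, ← append_assoc, getLastD_concat, getLastD_concat]

lemma take_len_sub2 (L : List ℕ) (u v : ℕ) :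
    (L ++ [u, v]).take ((L ++ [u, v]).length - 2) = L := by
  have h : (L ++ [u, v]).length - 2 = L.length := by simp
  rw [h, List.take_left]

end Helpers

/-- closed form for `T2 n j`, valid for `4 ≤ j < n-2`. -/
def cf (n j : ℕ) : List ℕ :=
  if j % 3 = 1 then range' (n-j+3) (j-3) ++ range' 1 (n-j) ++ [n, n-j+1]
  else if j % 3 = 2 then range' (n-j+3) (j-3) ++ range' 1 (n-j+1)
  else (n-j+3) :: n :: (range' (n-j+4) (j-4) ++ range' 1 (n-j+1))

lemma T2_one (n : ℕ) : T2 n 1 = range' 1 n := rfl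
lemma T2_two (n : ℕ) : T2 n 2 = range' 1 (n-1) := rfl

lemma T2_three (n : ℕ) (hn : 6 ≤ n) : T2 n 3 = n :: range' 1 (n-2) := by
  show T1 n 3 = _
  rw [T1, if_neg (by omega)]
  show (range' 1 n).getLastD 0 :: (range' 1 (n-1)).dropLast = _
  rw [range'_getLastD 1 n (by omega), range'_dropLast]
  congr 1
  omega
lemma range'_two (s : ℕ) : range' s 2 = [s, s+1] := rfl
lemma range'_expand2 (s n : ℕ) : range' s (n+2) = s :: (s+1) :: range' (s+2) n := by
  rw [show n+2 = (n+1)+1 from rfl, range'_succ, range'_succ]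

lemma range'_getLastD' (s d x : ℕ) (hd : 1 ≤ d) : (range' s d).getLastD x = s + d - 1 := by
  obtain ⟨d', rfl⟩ : ∃ d', d = d' + 1 := ⟨d-1, by omega⟩
  rw [range'_concat, getLastD_concat]; omega

lemma range'_ne_nil' (s d : ℕ) (hd : 1 ≤ d) : range' s d ≠ [] := by
  simp [range'_eq_nil_iff]; omega

lemma append_range1_getLastD (L : List ℕ) (d : ℕ) (hd : 1 ≤ d) :
    (L ++ range' 1 d).getLastD 0 = d := by
  rw [getLastD_append' _ _ (range'_ne_nil' 1 d hd), range'_getLastD' _ _ _ hd]; omega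

lemma concat2_getLastD (L : List ℕ) (u v : ℕ) : (L ++ [u, v]).getLastD 0 = v := by
  rw [show L ++ [u,v] = (L ++ [u]) ++ [v] by simp, getLastD_concat]

lemma append_range1_dropLast (L : List ℕ) (d : ℕ) (hd : 1 ≤ d) :
    (L ++ range' 1 d).dropLast = L ++ range' 1 (d-1) := by
  rw [dropLast_append_of_ne_nil (range'_ne_nil' 1 d hd), range'_dropLast]

lemma range1_split2 (d : ℕ) (hd : 2 ≤ d) :
    range' 1 d = range' 1 (d-2) ++ [d-1, d] := by
  have h1 : range' 1 ((d-1)+1) = range' 1 (d-1) ++ [1+1*(d-1)] := range'_concat (s := 1) (n := d-1)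
  have h2 : range' 1 ((d-2)+1) = range' 1 (d-2) ++ [1+1*(d-2)] := range'_concat (s := 1) (n := d-2)
  rw [show d = (d-1)+1 by omega, h1, show d-1 = (d-2)+1 by omega, h2]
  simp
  constructor <;> omega

lemma cf_one_form (n j : ℕ) (h : j % 3 = 1) :
    cf n j = range' (n-j+3) (j-3) ++ range' 1 (n-j) ++ [n, n-j+1] := by simp [cf, h]

lemma cf_two_form (n j : ℕ) (h : j % 3 = 2) :
    cf n j = range' (n-j+3) (j-3) ++ range' 1 (n-j+1) := by
  rw [cf, if_neg (by omega), if_pos h]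

lemma cf_zero_form (n j : ℕ) (h : j % 3 = 0) :
    cf n j = (n-j+3) :: n :: (range' (n-j+4) (j-4) ++ range' 1 (n-j+1)) := by
  rw [cf, if_neg (by omega), if_neg (by omega)]


lemma zero_form_take_drop (x y s dA d : ℕ) (hd : 2 ≤ d) :
    ((x :: y :: (range' s dA ++ range' 1 d)).take
      ((x :: y :: (range' s dA ++ range' 1 d)).length - 2)).drop 2
    = range' s dA ++ range' 1 (d-2) := by
  rw [range1_split2 d hd]
  rw [show x :: y :: (range' s dA ++ (range' 1 (d-2) ++ [d-1, d]))
      = (x :: y :: (range' s dA ++ range' 1 (d-2))) ++ [d-1, d] by simp]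
  rw [take_len_sub2]
  rfl

lemma zero_form_dropLast_getLastD (x y s dA d : ℕ) (hd : 2 ≤ d) :
    ((x :: y :: (range' s dA ++ range' 1 d)).dropLast).getLastD 0 = d - 1 := by
  rw [show x :: y :: (range' s dA ++ range' 1 d) = (x :: y :: range' s dA) ++ range' 1 d by simp,
    append_range1_dropLast _ _ (by omega), append_range1_getLastD _ _ (by omega)]

lemma T2_cf (n : ℕ) (hn : 6 ≤ n) : ∀ j, 4 ≤ j → j < n - 2 → T2 n j = cf n j := by
  intro j
  induction j using Nat.strong_induction_on with
  | _ j ih =>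
    intro h4 hlt
    rcases Nat.lt_or_ge j 7 with h7 | h7
    · interval_cases j
      · -- j = 4
        obtain ⟨w, rfl⟩ : ∃ w, n = w + 7 := ⟨n-7, by omega⟩
        have ht3 : T2 (w+7) 3 = (w+7) :: range' 1 (w+5) := by
          rw [T2_three _ (by omega), show w+7-2 = w+5 by omega]
        rw [show (4:ℕ) = 0+4 from rfl, T2, if_neg (by omega), if_neg (by omega),
          if_neg (by omega), if_pos (by norm_num), if_pos rfl]
        show (T2 (w+7) 2).getLastD 0 :: (((T2 (w+7) 3).take ((T2 (w+7) 3).length-2)).drop 1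
          ++ [w+7, (T2 (w+7) 3).dropLast.getLastD 0]) = _
        rw [T2_two, ht3]
        have e1 : (range' 1 (w+7-1)).getLastD 0 = w+6 := by
          rw [range'_getLastD' 1 (w+7-1) 0 (by omega)]; omega
        have e2 : (((w+7) :: range' 1 (w+5)).take (((w+7) :: range' 1 (w+5)).length - 2)).drop 1
            = range' 1 (w+3) := by
          rw [show ((w+7) :: range' 1 (w+5)).length - 2 = (w+3)+1 by simp,
            take_succ_cons, take_range'_, Nat.min_eq_left (by omega), drop_one, tail_cons]
        have e3 : ((w+7) :: range' 1 (w+5)).dropLast.getLastD 0 = w + 4 := by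
          rw [show (w+7) :: range' 1 (w+5) = [w+7] ++ range' 1 (w+5) from rfl,
            append_range1_dropLast _ _ (by omega), append_range1_getLastD _ _ (by omega)]
          omega
        rw [e1, e2, e3, cf_one_form _ 4 (by norm_num)]
        rw [show w+7-4+3 = w+6 by omega, show w+7-4+1 = w+4 by omega,
          show w+7-4 = w+3 by omega, show (4:ℕ)-3 = 1 from rfl, range'_one]
        simp
      · -- j = 5
        obtain ⟨w, rfl⟩ : ∃ w, n = w + 8 := ⟨n-8, by omega⟩
        have ht4 : T2 (w+8) 4 = (range' (w+7) 1 ++ range' 1 (w+4)) ++ [w+8, w+5] := by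
          rw [ih 4 (by omega) (by omega) (by omega), cf_one_form _ 4 (by norm_num),
            show w+8-4+3 = w+7 by omega, show w+8-4+1 = w+5 by omega,
            show w+8-4 = w+4 by omega, show (4:ℕ)-3 = 1 from rfl]
        have ht3 : T2 (w+8) 3 = (w+8) :: range' 1 (w+6) := by
          rw [T2_three _ (by omega), show w+8-2 = w+6 by omega]
        rw [show (5:ℕ) = 1+4 from rfl, T2, if_neg (by omega), if_neg (by omega),
          if_neg (by omega), if_neg (by norm_num), if_pos (by norm_num)]
        show (T2 (w+8) 3).getLastD 0 :: (T2 (w+8) 4).take ((T2 (w+8) 4).length-2) = _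
        rw [ht3, ht4, take_len_sub2]
        rw [show (w+8) :: range' 1 (w+6) = [w+8] ++ range' 1 (w+6) from rfl,
          append_range1_getLastD _ _ (by omega)]
        rw [cf_two_form _ 5 (by norm_num), show w+8-5+3 = w+6 by omega,
          show w+8-5+1 = w+4 by omega, show (5:ℕ)-3 = 2 from rfl, range'_two, range'_one]
        simp
      · -- j = 6
        obtain ⟨w, rfl⟩ : ∃ w, n = w + 9 := ⟨n-9, by omega⟩
        have ht4 : T2 (w+9) 4 = (range' (w+8) 1 ++ range' 1 (w+5)) ++ [w+9, w+6] := by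
          rw [ih 4 (by omega) (by omega) (by omega), cf_one_form _ 4 (by norm_num),
            show w+9-4+3 = w+8 by omega, show w+9-4+1 = w+6 by omega,
            show w+9-4 = w+5 by omega, show (4:ℕ)-3 = 1 from rfl]
        have ht5 : T2 (w+9) 5 = range' (w+7) 2 ++ range' 1 (w+5) := by
          rw [ih 5 (by omega) (by omega) (by omega), cf_two_form _ 5 (by norm_num),
            show w+9-5+3 = w+7 by omega, show w+9-5+1 = w+5 by omega,
            show (5:ℕ)-3 = 2 from rfl]
        rw [show (6:ℕ) = 2+4 from rfl, T2, if_neg (by omega), if_neg (by omega),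
          if_neg (by omega), if_neg (by norm_num), if_neg (by norm_num)]
        show (T2 (w+9) 4).getLastD 0 :: (w+9) :: (T2 (w+9) 5).dropLast = _
        rw [ht4, ht5, show ((range' (w+8) 1 ++ range' 1 (w+5)) ++ [w+9, w+6]) =
          (range' (w+8) 1 ++ range' 1 (w+5)) ++ [w+9, w+6] from rfl, concat2_getLastD,
          append_range1_dropLast _ _ (by omega)]
        rw [cf_zero_form _ 6 (by norm_num), show w+9-6+3 = w+6 by omega,
          show w+9-6+4 = w+7 by omega, show w+9-6+1 = w+4 by omega,
          show (6:ℕ)-4 = 2 from rfl, show w+5-1 = w+4 by omega]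
    · -- j ≥ 7
      obtain ⟨m, rfl⟩ : ∃ m, j = m + 7 := ⟨j-7, by omega⟩
      obtain ⟨w, rfl⟩ : ∃ w, n = m + 10 + w := ⟨n-(m+10), by omega⟩
      have ihp := ih (m+6) (by omega) (by omega) (by omega)
      have ihq := ih (m+5) (by omega) (by omega) (by omega)
      rw [show m+7 = m+3+4 from rfl] at *
      obtain h3 | h3 | h3 : (m+3+4)%3 = 0 ∨ (m+3+4)%3 = 1 ∨ (m+3+4)%3 = 2 := by omega
      · -- j ≡ 0 : σ_j = q.last :: n :: p.dropLast
        have hp : T2 (m+10+w) (m+6) = range' (w+7) (m+3) ++ range' 1 (w+5) := by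
          rw [ihp, cf_two_form (m+10+w) (m+6) (by omega), show m+10+w-(m+6)+3 = w+7 by omega,
            show m+10+w-(m+6)+1 = w+5 by omega, show m+6-3 = m+3 by omega]
        have hq : T2 (m+10+w) (m+5) = range' (w+8) (m+2) ++ range' 1 (w+5) ++ [m+10+w, w+6] := by
          rw [ihq, cf_one_form (m+10+w) (m+5) (by omega), show m+10+w-(m+5)+3 = w+8 by omega,
            show m+10+w-(m+5)+1 = w+6 by omega, show m+10+w-(m+5) = w+5 by omega,
            show m+5-3 = m+2 by omega]
        rw [T2, if_neg (by omega), if_neg (by omega), if_neg (by omega),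
          if_neg (by omega), if_neg (by omega)]
        show (T2 (m+10+w) (m+5)).getLastD 0 :: (m+10+w) :: (T2 (m+10+w) (m+6)).dropLast = _
        rw [hp, hq, show range' (w+8) (m+2) ++ range' 1 (w+5) ++ [m+10+w, w+6]
            = (range' (w+8) (m+2) ++ range' 1 (w+5)) ++ [m+10+w, w+6] by simp,
          concat2_getLastD, append_range1_dropLast _ _ (by omega),
          cf_zero_form _ _ h3, show m+10+w-(m+3+4)+3 = w+6 by omega,
          show m+10+w-(m+3+4)+4 = w+7 by omega, show m+10+w-(m+3+4)+1 = w+4 by omega,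
          show m+3+4-4 = m+3 by omega, show w+5-1 = w+4 by omega]
      · -- j ≡ 1 : σ_j = q.last :: p.head :: ((p.take (l-2)).drop 2 ++ [n, p.dropLast.last])
        have hp : T2 (m+10+w) (m+6)
            = (w+7) :: (m+10+w) :: (range' (w+8) (m+2) ++ range' 1 (w+5)) := by
          rw [ihp, cf_zero_form (m+10+w) (m+6) (by omega), show m+10+w-(m+6)+3 = w+7 by omega,
            show m+10+w-(m+6)+4 = w+8 by omega, show m+10+w-(m+6)+1 = w+5 by omega,
            show m+6-4 = m+2 by omega]
        have hq : T2 (m+10+w) (m+5) = range' (w+8) (m+2) ++ range' 1 (w+6) := by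
          rw [ihq, cf_two_form (m+10+w) (m+5) (by omega), show m+10+w-(m+5)+3 = w+8 by omega,
            show m+10+w-(m+5)+1 = w+6 by omega, show m+5-3 = m+2 by omega]
        rw [T2, if_neg (by omega), if_neg (by omega), if_neg (by omega),
          if_pos h3, if_neg (by omega)]
        show (T2 (m+10+w) (m+5)).getLastD 0 :: (T2 (m+10+w) (m+6)).headD 0 ::
          (((T2 (m+10+w) (m+6)).take ((T2 (m+10+w) (m+6)).length - 2)).drop 2
            ++ [m+10+w, (T2 (m+10+w) (m+6)).dropLast.getLastD 0]) = _
        rw [hp, hq, append_range1_getLastD _ _ (by omega),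
          zero_form_take_drop _ _ _ _ _ (by omega),
          zero_form_dropLast_getLastD _ _ _ _ _ (by omega),
          headD_cons, cf_one_form _ _ h3, show m+10+w-(m+3+4)+3 = w+6 by omega,
          show m+10+w-(m+3+4)+1 = w+4 by omega, show m+10+w-(m+3+4) = w+3 by omega,
          show m+3+4-3 = m+4 by omega, show w+5-2 = w+3 by omega,
          show w+5-1 = w+4 by omega,
          (range'_expand2 (w+6) (m+2) :
            range' (w+6) (m+4) = (w+6) :: (w+7) :: range' (w+8) (m+2))]
        simp
      · -- j ≡ 2 : σ_j = q.last :: p.take (l-2)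
        have hp : T2 (m+10+w) (m+6)
            = (range' (w+7) (m+3) ++ range' 1 (w+4)) ++ [m+10+w, w+5] := by
          rw [ihp, cf_one_form (m+10+w) (m+6) (by omega), show m+10+w-(m+6)+3 = w+7 by omega,
            show m+10+w-(m+6)+1 = w+5 by omega, show m+10+w-(m+6) = w+4 by omega,
            show m+6-3 = m+3 by omega]
        have hq : T2 (m+10+w) (m+5)
            = (w+8) :: (m+10+w) :: (range' (w+9) (m+1) ++ range' 1 (w+6)) := by
          rw [ihq, cf_zero_form (m+10+w) (m+5) (by omega), show m+10+w-(m+5)+3 = w+8 by omega,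
            show m+10+w-(m+5)+4 = w+9 by omega, show m+10+w-(m+5)+1 = w+6 by omega,
            show m+5-4 = m+1 by omega]
        rw [T2, if_neg (by omega), if_neg (by omega), if_neg (by omega),
          if_neg (by omega), if_pos h3]
        show (T2 (m+10+w) (m+5)).getLastD 0 ::
          (T2 (m+10+w) (m+6)).take ((T2 (m+10+w) (m+6)).length - 2) = _
        rw [hp, hq, take_len_sub2,
          show (w+8) :: (m+10+w) :: (range' (w+9) (m+1) ++ range' 1 (w+6))
            = ((w+8) :: (m+10+w) :: range' (w+9) (m+1)) ++ range' 1 (w+6) by simp,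
          append_range1_getLastD _ _ (by omega),
          cf_two_form _ _ h3, show m+10+w-(m+3+4)+3 = w+6 by omega,
          show m+10+w-(m+3+4)+1 = w+4 by omega, show m+3+4-3 = m+4 by omega,
          (range'_expand2 (w+6) (m+2) :
            range' (w+6) (m+4) = (w+6) :: (w+7) :: range' (w+8) (m+2)),
          (range'_succ (s := w+7) (n := m+2) (step := 1) :
            range' (w+7) (m+3) = (w+7) :: range' (w+8) (m+2))]
        simp

lemma F_succ (n i : ℕ) (h : i < n) :
    ((T2List n).take (i+1)).flatten = ((T2List n).take i).flatten ++ T2 n (i+1) := by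
  rw [take_succ]
  simp [T2List, h]

lemma F_split (n i j : ℕ) (h : i ≤ j) :
    ∃ X, ((T2List n).take j).flatten = ((T2List n).take i).flatten ++ X := by
  refine ⟨(((T2List n).take j).drop i).flatten, ?_⟩
  conv_lhs => rw [← take_append_drop i ((T2List n).take j)]
  rw [flatten_append, take_take, Nat.min_eq_left h]

lemma F_mono (n i j : ℕ) (h : i ≤ j) :
    ((T2List n).take i).flatten <+ ((T2List n).take j).flatten := by
  obtain ⟨X, hX⟩ := F_split n i j h
  rw [hX]; exact sublist_append_left _ _

lemma embed_lemma (n k : ℕ) (hkn : k - 2 ≤ n)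
    (hfc : ForwardComplete (Finset.Icc 1 n) ((T2List n).take (k-2)))
    (j : ℕ) (hj1 : j ≤ k-2) (τ : List ℕ) (hd : τ.Nodup)
    (hA : ∀ a ∈ τ, a ∈ Finset.Icc 1 n) (hlen : τ.length ≤ j) :
    τ <+ ((T2List n).take j).flatten := by
  rcases Nat.eq_zero_or_pos τ.length with h0 | hpos
  · rw [List.length_eq_zero_iff] at h0; subst h0; exact nil_sublist _
  · have hlen2 : τ.length ≤ ((T2List n).take (k-2)).length := by
      simp [T2List]; omega
    have h2 := hfc τ.length hpos hlen2 τ ⟨rfl, hd, hA⟩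
    rw [take_take, Nat.min_eq_left (le_trans hlen hj1)] at h2
    exact h2.trans (F_mono n _ j hlen)

lemma pair_append {c w : ℕ} {X Y : List ℕ} (h1 : c ∈ X) (h2 : w ∈ Y) : [c, w] <+ X ++ Y := by
  simpa using ((singleton_sublist.2 h1).append (singleton_sublist.2 h2))

lemma range1_concat_last (d : ℕ) (hd : 1 ≤ d) : range' 1 d = range' 1 (d-1) ++ [d] := by
  conv_lhs => rw [show d = (d-1)+1 by omega]
  rw [range'_concat, show 1+1*(d-1) = d by omega]

lemma sigma_last (n j : ℕ) (hn : 6 ≤ n) (h2 : 2 ≤ j) (hlt : j < n-2) :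
    ∃ P, T2 n j = P ++ [n-j+1] := by
  rcases (by omega : j = 2 ∨ j = 3 ∨ 4 ≤ j) with rfl | rfl | h4
  · refine ⟨range' 1 (n-2), ?_⟩
    rw [T2_two, range1_concat_last (n-1) (by omega), show n-1-1 = n-2 by omega,
      show n-1 = n-2+1 by omega]
  · refine ⟨n :: range' 1 (n-3), ?_⟩
    rw [T2_three n hn, range1_concat_last (n-2) (by omega), show n-2-1 = n-3 by omega,
      show n-2 = n-3+1 by omega]
    simp
  · rw [T2_cf n hn j h4 hlt]
    rcases (by omega : j % 3 = 1 ∨ j % 3 = 2 ∨ j % 3 = 0) with h3 | h3 | h3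
    · exact ⟨range' (n-j+3) (j-3) ++ range' 1 (n-j) ++ [n], by rw [cf_one_form n j h3]; simp⟩
    · refine ⟨range' (n-j+3) (j-3) ++ range' 1 (n-j), ?_⟩
      rw [cf_two_form n j h3, range1_concat_last (n-j+1) (by omega),
        show n-j+1-1 = n-j by omega]
      simp
    · refine ⟨(n-j+3) :: n :: (range' (n-j+4) (j-4) ++ range' 1 (n-j)), ?_⟩
      rw [cf_zero_form n j h3, range1_concat_last (n-j+1) (by omega),
        show n-j+1-1 = n-j by omega]
      simp

lemma w_mem (n j : ℕ) (hn : 6 ≤ n) (h2 : 2 ≤ j) (hlt : j < n-2) : n-j ∈ T2 n j := by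
  rcases (by omega : j = 2 ∨ j = 3 ∨ 4 ≤ j) with rfl | rfl | h4
  · rw [T2_two]; rw [mem_range'_1]; omega
  · rw [T2_three n hn]; exact mem_cons_of_mem _ (by rw [mem_range'_1]; omega)
  · rw [T2_cf n hn j h4 hlt]
    rcases (by omega : j % 3 = 1 ∨ j % 3 = 2 ∨ j % 3 = 0) with h3 | h3 | h3
    · rw [cf_one_form n j h3]
      refine mem_append_left _ (mem_append_right _ ?_); rw [mem_range'_1]; omega
    · rw [cf_two_form n j h3]
      refine mem_append_right _ ?_; rw [mem_range'_1]; omega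
    · rw [cf_zero_form n j h3]
      exact mem_cons_of_mem _ (mem_cons_of_mem _ (mem_append_right _ (by rw [mem_range'_1]; omega)))

lemma pair_mem (n j c : ℕ) (hn : 6 ≤ n) (h2 : 2 ≤ j) (hlt : j < n-2)
    (hc1 : 1 ≤ c) (hcn : c ≤ n) (d0 : c ≠ n) (d1 : c ≠ n-j) (d2 : c ≠ n-j+1)
    (d3 : c ≠ n-j+2) : [c, n-j] <+ T2 n j := by
  rcases (by omega : j = 2 ∨ j = 3 ∨ 4 ≤ j) with rfl | rfl | h4
  · rw [T2_two]; exact pair_sublist_range' (by omega) (by omega) (by omega)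
  · rw [T2_three n hn]
    exact (pair_sublist_range' (by omega) (by omega) (by omega)).cons n
  · rw [T2_cf n hn j h4 hlt]
    rcases (by omega : j % 3 = 1 ∨ j % 3 = 2 ∨ j % 3 = 0) with h3 | h3 | h3
    · rw [cf_one_form n j h3]
      refine Sublist.trans ?_ (sublist_append_left _ [n, n-j+1])
      by_cases hch : n-j+3 ≤ c
      · exact pair_append (by rw [mem_range'_1]; omega) (by rw [mem_range'_1]; omega)
      · exact Sublist.trans (pair_sublist_range' (by omega) (by omega) (by omega))
          (sublist_append_right _ _)
    · rw [cf_two_form n j h3]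
      by_cases hch : n-j+3 ≤ c
      · exact pair_append (by rw [mem_range'_1]; omega) (by rw [mem_range'_1]; omega)
      · exact Sublist.trans (pair_sublist_range' (by omega) (by omega) (by omega))
          (sublist_append_right _ _)
    · rw [cf_zero_form n j h3,
        show (n-j+3) :: n :: (range' (n-j+4) (j-4) ++ range' 1 (n-j+1))
          = [n-j+3, n] ++ (range' (n-j+4) (j-4) ++ range' 1 (n-j+1)) from rfl]
      by_cases hcx : c = n-j+3
      · exact pair_append (by simp [hcx]) (mem_append_right _ (by rw [mem_range'_1]; omega))
      · refine Sublist.trans ?_ (sublist_append_right [n-j+3, n] _)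
        by_cases hch : n-j+4 ≤ c
        · exact pair_append (by rw [mem_range'_1]; omega) (by rw [mem_range'_1]; omega)
        · exact Sublist.trans (pair_sublist_range' (by omega) (by omega) (by omega))
            (sublist_append_right _ _)

lemma F_succ' (n i : ℕ) (h1 : 1 ≤ i) (h : i ≤ n) :
    ((T2List n).take i).flatten = ((T2List n).take (i-1)).flatten ++ T2 n i := by
  obtain ⟨i', rfl⟩ : ∃ i', i = i'+1 := ⟨i-1, by omega⟩
  simpa using F_succ n i' (by omega)

lemma lemN (n k : ℕ) (hn : 6 ≤ n) (hk1 : 3 < k) (hk2 : k < n-2)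
    (hfc : ForwardComplete (Finset.Icc 1 n) ((T2List n).take (k-2))) :
    ∀ j, 2 ≤ j → j ≤ k-2 → ∀ τ : List ℕ, τ.Nodup → (∀ a ∈ τ, a ∈ Finset.Icc 1 n) →
      τ.length ≤ j → n ∉ τ → (n-j) ∉ τ →
      (τ ++ [n-j]) <+ ((T2List n).take j).flatten := by
  intro j
  induction j using Nat.strong_induction_on with
  | _ j ih =>
    intro hj2 hjk τ hnd hA hlen hnn hw
    obtain ⟨i, rfl⟩ : ∃ i, j = i+1 := ⟨j-1, by omega⟩
    have hjn : i+1 < n - 2 := by omega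
    have hF := F_succ n i (by omega)
    obtain rfl | ⟨α, c, rfl⟩ := τ.eq_nil_or_concat
    · rw [nil_append, singleton_sublist, hF]
      exact mem_append_right _ (w_mem n (i+1) hn (by omega) hjn)
    · rw [List.concat_eq_append] at hnd hA hlen hnn hw ⊢
      have hcA := hA c (by simp)
      rw [Finset.mem_Icc] at hcA
      have hcn : c ≠ n := fun h => hnn (by simp [h])
      have hcw : c ≠ n-(i+1) := fun h => hw (by simp [h])
      have hnd' := List.nodup_append.1 hnd
      have hαnd : α.Nodup := hnd'.1
      have hcα : c ∉ α := fun h => (hnd'.2.2 _ h _ (by simp) rfl).elim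
      have hαn : n ∉ α := fun h => hnn (mem_append_left _ h)
      have hαw : n-(i+1) ∉ α := fun h => hw (mem_append_left _ h)
      have hαA : ∀ a ∈ α, a ∈ Finset.Icc 1 n := fun a ha => hA a (mem_append_left _ ha)
      have hαlen : α.length ≤ i := by
        have := hlen; simp [List.length_append] at this; omega
      by_cases hc2 : c = n-(i+1)+2
      · -- c is the last element of σ_i : strip and reattach
        have hi2 : 2 ≤ i := by
          rcases (by omega : i = 1 ∨ 2 ≤ i) with rfl | h
          · exact absurd (by omega : c = n) hcn
          · exact h
        have hceq : c = n-i+1 := by omega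
        obtain ⟨P, hP⟩ := sigma_last n i hn hi2 (by omega)
        have hα : α <+ ((T2List n).take i).flatten :=
          embed_lemma n k (by omega) hfc i (by omega) α hαnd hαA hαlen
        rw [F_succ' n i (by omega) (by omega), hP, ← append_assoc] at hα
        have hα2 := strip_last hα (by rw [← hceq]; exact hcα)
        have h1 : α ++ [c] <+ ((T2List n).take i).flatten := by
          rw [F_succ' n i (by omega) (by omega), hP, ← append_assoc]
          exact hα2.append (by rw [hceq])
        rw [hF]
        exact h1.append (singleton_sublist.2 (w_mem n (i+1) hn (by omega) hjn))
      · by_cases hc1 : c = n-(i+1)+1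
        · rcases (by omega : i = 1 ∨ 2 ≤ i) with rfl | hi2
          · -- base case j = 2
            have hF2 : ((T2List n).take 2).flatten = range' 1 n ++ range' 1 (n-1) := by
              rw [F_succ n 1 (by omega), F_succ n 0 (by omega)]
              simp [T2_one, T2_two]
            rw [hF2]
            obtain rfl | ⟨β, c₁, rfl⟩ := α.eq_nil_or_concat
            · exact pair_append (by rw [mem_range'_1]; omega) (by rw [mem_range'_1]; omega)
            · have hβ : β = [] := by
                simpa using hαlen
              subst hβ
              rw [List.concat_eq_append, List.nil_append] at hcα hαn hαw hαA
              have hc₁A := hαA c₁ (by simp)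
              rw [Finset.mem_Icc] at hc₁A
              have h5 : c₁ ≠ c := fun h => hcα (by simp [h])
              have h6 : c₁ ≠ n := fun h => hαn (by simp [h])
              have h7 : c₁ ≠ n-2 := fun h => hαw (by simpa [h] using (by omega : n-(1+1) = n-2).symm ▸ (by simp [h] : n-2 ∈ ([c₁] : List ℕ)))
              have hpair : [c₁, c] <+ range' 1 n :=
                pair_sublist_range' (by omega) (by omega) (by omega)
              have hw2 : [n-(1+1)] <+ range' 1 (n-1) := by
                rw [singleton_sublist, mem_range'_1]; omega
              simpa using hpair.append hw2
          · -- recursive case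
            have hrec := ih i (by omega) (by omega) (by omega) α hαnd hαA hαlen hαn
              (by rw [show n-i = c by omega]; exact hcα)
            rw [show n-i = c by omega] at hrec
            rw [hF]
            exact hrec.append (singleton_sublist.2 (w_mem n (i+1) hn (by omega) hjn))
        · -- generic case
          have h1 : α <+ ((T2List n).take i).flatten :=
            embed_lemma n k (by omega) hfc i (by omega) α hαnd hαA hαlen
          have h2 := pair_mem n (i+1) c hn (by omega) hjn (by omega) (by omega)
            hcn hcw hc1 hc2
          rw [hF]
          simpa [append_assoc] using h1.append h2


/-- **Claim 14.** Let `n ≥ 6`, `n ≡ 0 (mod 3)`, and let `σ₁,…,σ_n` be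
the `T₂(n)` list over `A = {1,…,n}`. Let `3 < k < n-2` with `k ≡ 2 (mod 3)` and
assume `σ₁,…,σ_{k-2}` is forward complete. Let `σ' = σ_{k-1} | (n-3)` be `σ_{k-1}`
with its last two elements removed. Then for every `ρ ∈ [A]_k` with last element `n`,
`ρ | (k-1)` is a subsequence of `σ₁σ₂⋯σ_{k-2}σ'`. -/
theorem T2_claim14 (n : ℕ) (hn : 6 ≤ n) (hn3 : n % 3 = 0)
    (k : ℕ) (hk1 : 3 < k) (hk2 : k < n - 2) (hk3 : k % 3 = 2)
    (hfc : ForwardComplete (Finset.Icc 1 n) ((T2List n).take (k-2)))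
    (ρ : List ℕ) (hρ : DistinctSeq (Finset.Icc 1 n) k ρ)
    (hlast : ρ.getLastD 0 = n) :
    (ρ.take (k-1)).Sublist ((((T2List n).take (k-2)).flatten) ++ (T2 n (k-1)).take (n-3)) := by
  obtain ⟨hlen, hnd, hA⟩ := hρ
  have hk5 : 5 ≤ k := by omega
  obtain rfl | ⟨γ, z, rfl⟩ := ρ.eq_nil_or_concat
  · simp at hlen; omega
  rw [List.concat_eq_append] at hlen hnd hA hlast ⊢
  rw [getLastD_concat] at hlast
  have hlast' := hlast.symm
  subst hlast'
  rw [List.length_append] at hlen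
  simp only [List.length_singleton] at hlen
  have hγlen : γ.length = k - 1 := by omega
  have hnd' := List.nodup_append.1 hnd
  have hγnd : γ.Nodup := hnd'.1
  have hnγ : n ∉ γ := fun h => (hnd'.2.2 _ h _ (by simp) rfl).elim
  have hγA : ∀ a ∈ γ, a ∈ Finset.Icc 1 n := fun a ha => hA a (mem_append_left _ ha)
  have htake : (γ ++ [n]).take (k-1) = γ := by
    rw [take_append, hγlen, Nat.sub_self, take_zero, append_nil,
      take_of_length_le (by omega)]
  rw [htake]
  -- σ' closed form
  have hk14 : 4 ≤ k - 1 := by omega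
  have hσ : T2 n (k-1) = range' (n-(k-1)+3) (k-1-3) ++ range' 1 (n-(k-1)) ++ [n, n-(k-1)+1] := by
    rw [T2_cf n hn (k-1) hk14 (by omega), cf_one_form n (k-1) (by omega)]
  have hσ' : (T2 n (k-1)).take (n-3)
      = range' (n-(k-1)+3) (k-1-3) ++ range' 1 (n-(k-1)) := by
    rw [hσ, show range' (n-(k-1)+3) (k-1-3) ++ range' 1 (n-(k-1)) ++ [n, n-(k-1)+1]
      = (range' (n-(k-1)+3) (k-1-3) ++ range' 1 (n-(k-1))) ++ [n, n-(k-1)+1] by simp,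
      take_left' (by simp [length_range']; omega)]
  rw [hσ']
  -- split γ = τ' ++ [d]
  obtain rfl | ⟨τ, d, rfl⟩ := γ.eq_nil_or_concat
  · simp at hγlen; omega
  rw [List.concat_eq_append] at *
  have hdA := hγA d (by simp)
  rw [Finset.mem_Icc] at hdA
  have hdn : d ≠ n := fun h => hnγ (by simp [h])
  have hτnd : τ.Nodup := (List.nodup_append.1 hγnd).1
  have hdτ : d ∉ τ := fun h => (((List.nodup_append.1 hγnd).2.2) _ h _ (by simp) rfl).elim
  have hnτ : n ∉ τ := fun h => hnγ (mem_append_left _ h)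
  have hτA : ∀ a ∈ τ, a ∈ Finset.Icc 1 n := fun a ha => hγA a (mem_append_left _ ha)
  have hτlen : τ.length ≤ k - 2 := by
    rw [List.length_append] at hγlen; simp at hγlen; omega
  by_cases hd1 : d = n-(k-2)
  · -- use lemN
    subst hd1
    have h1 := lemN n k hn hk1 hk2 hfc (k-2) (by omega) (le_refl _) τ hτnd hτA hτlen hnτ hdτ
    exact h1.trans (sublist_append_left _ _)
  · by_cases hd2 : d = n-(k-2)+1
    · -- strip last element of F_{k-2}
      obtain ⟨P, hP⟩ := sigma_last n (k-2) hn (by omega) (by omega)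
      have hτF : τ <+ ((T2List n).take (k-2)).flatten :=
        embed_lemma n k (by omega) hfc (k-2) (le_refl _) τ hτnd hτA hτlen
      rw [F_succ' n (k-2) (by omega) (by omega), hP, ← append_assoc] at hτF
      have h2 := strip_last hτF (by rw [← hd2]; exact hdτ)
      have h3 : τ ++ [d] <+ ((T2List n).take (k-2)).flatten := by
        rw [F_succ' n (k-2) (by omega) (by omega), hP, ← append_assoc]
        exact h2.append (by rw [hd2])
      exact h3.trans (sublist_append_left _ _)
    · -- d lands in σ'
      have hτF : τ <+ ((T2List n).take (k-2)).flatten :=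
        embed_lemma n k (by omega) hfc (k-2) (le_refl _) τ hτnd hτA hτlen
      have hd3 : [d] <+ range' (n-(k-1)+3) (k-1-3) ++ range' 1 (n-(k-1)) := by
        rw [singleton_sublist, mem_append]
        by_cases hdh : n-(k-1)+3 ≤ d
        · left; rw [mem_range'_1]; omega
        · right; rw [mem_range'_1]; omega
      simpa [append_assoc] using hτF.append hd3
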